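/- Let R be a commutative ring and σ : P₋₁ → P₀ an R-linear map between projective R-modules which is of finite type, i.e. there is a family (σᵢ)_{i∈I} of R-linear maps between finitely generated projective R-modules with D_σ = ⋂_{i∈I} D_{σᵢ}. Then there exists a Gabriel filter of finite type G on R such that D_σ = Div G, i.e. for every R-module M: every R-linear map P₋₁ → M factors through σ if and only if I·M = M for every I ∈ G. -/

import Mathlib

universe u

/-- `M ∈ D_σ`: every `R`-linear map `A → M` factors through `σ : A → B`. -/
def MemD {R : Type u} [Ring R] {A B : Type u} [AddCommGroup A] [Module R A]
    [AddCommGroup B] [Module R B] (σ : A →ₗ[R] B)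
    (M : Type u) [AddCommGroup M] [Module R M] : Prop :=
  ∀ f : A →ₗ[R] M, ∃ g : B →ₗ[R] M, g.comp σ = f

/-- `M ∈ Gen T`: `M` is an epimorphic image of a direct sum of copies of `T`. -/
def MemGen (R : Type u) [Ring R] (T : Type u) [AddCommGroup T] [Module R T]
    (M : Type u) [AddCommGroup M] [Module R M] : Prop :=
  ∃ (ι : Type u) (g : (ι →₀ T) →ₗ[R] M), Function.Surjective g

/-- `T` is a silting module: it has a projective presentation `P₋₁ →σ P₀ → T → 0`
with `Gen T = D_σ`. -/
def IsSilting (R : Type u) [Ring R] (T : Type u) [AddCommGroup T] [Module R T] : Prop :=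
  ∃ (P₁ P₀ : Type u) (_ : AddCommGroup P₁) (_ : Module R P₁)
    (_ : AddCommGroup P₀) (_ : Module R P₀),
      Module.Projective R P₁ ∧ Module.Projective R P₀ ∧
      ∃ (σ : P₁ →ₗ[R] P₀) (π : P₀ →ₗ[R] T),
        Function.Surjective π ∧ LinearMap.ker π = LinearMap.range σ ∧
        ∀ (M : Type u) [AddCommGroup M] [Module R M], MemGen R T M ↔ MemD σ M

/-- A bundled `R`-linear map between finitely generated projective `R`-modules. -/
structure FGProjMap (R : Type u) [Ring R] : Type (u + 1) where
  A : Type u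
  B : Type u
  [addA : AddCommGroup A]
  [modA : Module R A]
  [addB : AddCommGroup B]
  [modB : Module R B]
  finA : Module.Finite R A
  projA : Module.Projective R A
  finB : Module.Finite R B
  projB : Module.Projective R B
  f : A →ₗ[R] B

attribute [instance] FGProjMap.addA FGProjMap.modA FGProjMap.addB FGProjMap.modB

/-- `G` is a Gabriel filter of ideals of a commutative ring `R`. Here
`(I : x) = {r | x * r ∈ I}` is realized as the comap of `I` along `r ↦ x • r`. -/
def IsGabrielFilter {R : Type u} [CommRing R] (G : Set (Ideal R)) : Prop :=
  ⊤ ∈ G ∧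
  (∀ I J : Ideal R, I ∈ G → I ≤ J → J ∈ G) ∧
  (∀ I ∈ G, ∀ x : R, Submodule.comap (LinearMap.lsmul R R x) I ∈ G) ∧
  (∀ J : Ideal R, (∃ I ∈ G, ∀ x ∈ I, Submodule.comap (LinearMap.lsmul R R x) J ∈ G) →
    J ∈ G)

/-- `G` is of finite type: every ideal of `G` contains a finitely generated ideal
belonging to `G`. -/
def GabrielFiniteType {R : Type u} [CommRing R] (G : Set (Ideal R)) : Prop :=
  ∀ I ∈ G, ∃ J ∈ G, J ≤ I ∧ J.FG

/-- `M ∈ Div G`: `M` is `G`-divisible, i.e. `I • M = M` for every `I ∈ G`. -/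
def MemDiv {R : Type u} [CommRing R] (G : Set (Ideal R))
    (M : Type u) [AddCommGroup M] [Module R M] : Prop :=
  ∀ I ∈ G, I • (⊤ : Submodule R M) = ⊤

section
variable {R : Type u} [CommRing R]

def matVec {ι κ : Type} [Fintype κ] (D : Matrix ι κ R) (M : Type u) [AddCommGroup M]
    [Module R M] : (κ → M) →ₗ[R] (ι → M) where
  toFun v i := ∑ j, D i j • v j
  map_add' v w := by funext i; simp [smul_add, Finset.sum_add_distrib]
  map_smul' r v := by funext i; simp [Finset.smul_sum, smul_comm r]

@[simp] lemma matVec_apply {ι κ : Type} [Fintype κ] (D : Matrix ι κ R) (M : Type u)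
    [AddCommGroup M] [Module R M] (v : κ → M) (i : ι) :
    matVec D M v i = ∑ j, D i j • v j := rfl

lemma matVec_mul {ι κ' κ : Type} [Fintype κ'] [Fintype κ] (A : Matrix ι κ' R)
    (B : Matrix κ' κ R) (M : Type u) [AddCommGroup M] [Module R M] (v : κ → M) :
    matVec (A * B) M v = matVec A M (matVec B M v) := by
  funext i
  simp only [matVec_apply, Matrix.mul_apply, Finset.smul_sum, Finset.sum_smul]
  rw [Finset.sum_comm]
  simp [mul_smul]

lemma matVec_smul_one {ι : Type} [Fintype ι] [DecidableEq ι] (x : R) (M : Type u)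
    [AddCommGroup M] [Module R M] (v : ι → M) :
    matVec (x • (1 : Matrix ι ι R)) M v = x • v := by
  funext i
  simp [Matrix.one_apply, ite_smul, mul_smul]

def minorsIdeal {ι κ : Type} [Fintype ι] [DecidableEq ι] [Fintype κ]
    (D : Matrix ι κ R) : Ideal R :=
  Ideal.span (Set.range fun c : ι → κ => (D.submatrix id c).det)

lemma minorsIdeal_fg {ι κ : Type} [Fintype ι] [DecidableEq ι] [Fintype κ]
    (D : Matrix ι κ R) : (minorsIdeal (R := R) D).FG :=
  Submodule.fg_span (Set.finite_range _)

-- the submatrix action factors through the full action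
lemma matVec_submatrix {ι κ : Type} [Fintype ι] [Fintype κ] [DecidableEq κ]
    (D : Matrix ι κ R) (c : ι → κ) (M : Type u) [AddCommGroup M] [Module R M]
    (w : ι → M) :
    matVec (D.submatrix id c) M w
      = matVec D M (fun k => ∑ i', if c i' = k then w i' else 0) := by
  funext i
  simp only [matVec_apply, Matrix.submatrix_apply, id_eq, Finset.smul_sum]
  rw [Finset.sum_comm]
  congr 1
  funext i'
  simp [Finset.sum_ite_eq]

lemma smul_mem_range_matVec {ι κ : Type} [Fintype ι] [DecidableEq ι] [Fintype κ]
    [DecidableEq κ] (D : Matrix ι κ R) (M : Type u) [AddCommGroup M] [Module R M]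
    {x : R} (hx : x ∈ minorsIdeal (R := R) D) :
    ∀ v : ι → M, x • v ∈ LinearMap.range (matVec D M) := by
  refine Submodule.span_induction
    (p := fun x _ => ∀ v : ι → M, x • v ∈ LinearMap.range (matVec D M)) ?_ ?_ ?_ ?_ hx
  · rintro x ⟨c, rfl⟩ v
    set E := D.submatrix id c with hE
    have h1 : E.det • v = matVec (E * E.adjugate) M v := by
      rw [Matrix.mul_adjugate, matVec_smul_one]
    rw [h1, matVec_mul, matVec_submatrix]
    exact ⟨_, rfl⟩
  · intro v; rw [zero_smul]; exact Submodule.zero_mem _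
  · intro a b _ _ ha hb v
    rw [add_smul]; exact Submodule.add_mem _ (ha v) (hb v)
  · intro r a _ ha v
    rw [smul_eq_mul, mul_comm, mul_smul]
    exact ha (r • v)

lemma surjective_matVec_of_minors {ι κ : Type} [Fintype ι] [DecidableEq ι] [Fintype κ]
    [DecidableEq κ] (D : Matrix ι κ R) (M : Type u) [AddCommGroup M] [Module R M]
    (h : minorsIdeal (R := R) D • (⊤ : Submodule R M) = ⊤) :
    Function.Surjective (matVec D M) := by
  intro v
  have hv : ∀ i (m : M), m ∈ minorsIdeal (R := R) D • (⊤ : Submodule R M) →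
      Pi.single i m ∈ LinearMap.range (matVec D M) := by
    intro i m hm
    refine Submodule.smul_induction_on hm ?_ ?_
    · intro r hr n _
      rw [Pi.single_smul]
      exact smul_mem_range_matVec D M hr (Pi.single i n)
    · intro m₁ m₂ h₁ h₂
      rw [Pi.single_add]
      exact Submodule.add_mem _ h₁ h₂
  have : v ∈ LinearMap.range (matVec D M) := by
    rw [← Finset.univ_sum_single v]
    refine Submodule.sum_mem _ fun i _ => hv i (v i) ?_
    rw [h]; trivial
  exact this

lemma minors_smul_top_of_surjective (n : ℕ) :
    ∀ {κ : Type} [Fintype κ] (D : Matrix (Fin n) κ R) (M : Type u) [AddCommGroup M]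
      [Module R M], Function.Surjective (matVec D M) →
      minorsIdeal (R := R) D • (⊤ : Submodule R M) = ⊤ := by
  induction n with
  | zero =>
    intro κ _ D M _ _ _
    have h1 : (1 : R) ∈ minorsIdeal (R := R) D := by
      have : ((D.submatrix id Fin.elim0).det) ∈ minorsIdeal (R := R) D :=
        Ideal.subset_span ⟨Fin.elim0, rfl⟩
      rwa [Matrix.det_fin_zero] at this
    have : minorsIdeal (R := R) D = ⊤ := (Ideal.eq_top_iff_one _).2 h1
    rw [this]
    exact Submodule.top_smul ⊤
  | succ a ih =>
    intro κ _ D M _ _ hsurj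
    set J : Ideal R := minorsIdeal (R := R) D with hJ
    set Q := M ⧸ (J • (⊤ : Submodule R M)) with hQdef
    -- elements of J annihilate Q
    have hJQ : ∀ x ∈ J, ∀ q : Q, x • q = 0 := by
      intro x hx q
      obtain ⟨m, rfl⟩ := Submodule.Quotient.mk_surjective _ q
      rw [← Submodule.Quotient.mk_smul, Submodule.Quotient.mk_eq_zero]
      exact Submodule.smul_mem_smul hx trivial
    -- matVec D is surjective on Q
    have hQs : Function.Surjective (matVec D Q) := by
      intro t
      choose t' ht' using fun i => Submodule.Quotient.mk_surjective _ (t i)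
      obtain ⟨u', hu'⟩ := hsurj t'
      refine ⟨fun k => Submodule.Quotient.mk (u' k), ?_⟩
      funext i
      have : matVec D Q (fun k => Submodule.Quotient.mk (u' k)) i
          = Submodule.Quotient.mk (p := J • (⊤ : Submodule R M)) (matVec D M u' i) := by
        simp only [matVec_apply, ← Submodule.mkQ_apply, ← map_smul, ← map_sum]
      rw [this, hu', ht']
    -- the truncated matrix
    set Db : Matrix (Fin a) κ R := D.submatrix Fin.succ id with hDb
    have hDbs : Function.Surjective (matVec Db Q) := by
      intro v
      obtain ⟨u, hu⟩ := hQs (Fin.cons 0 v)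
      refine ⟨u, ?_⟩
      funext i
      have : matVec Db Q u i = matVec D Q u i.succ := rfl
      rw [this, hu, Fin.cons_succ]
    have hQtop : minorsIdeal (R := R) Db • (⊤ : Submodule R Q) = ⊤ := ih Db Q hDbs
    -- key cofactor computation : minors of Db annihilate Q
    have hkill : ∀ (c : Fin a → κ) (q : Q), (Db.submatrix id c).det • q = 0 := by
      intro c q
      obtain ⟨u, hu⟩ := hQs (Fin.cons q 0)
      have hterm : ∀ k : κ, (D.submatrix id (Fin.cons k c)).det • u k = 0 := fun k =>
        hJQ _ (Ideal.subset_span ⟨Fin.cons k c, rfl⟩) (u k)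
      have hzero : (0 : Q) = ∑ k, (D.submatrix id (Fin.cons k c)).det • u k := by
        simp [hterm]
      have hexp : ∀ k : κ, (D.submatrix id (Fin.cons k c)).det
          = ∑ i : Fin (a + 1), (-1) ^ (i : ℕ) * (D.submatrix i.succAbove c).det * D i k := by
        intro k
        rw [Matrix.det_succ_column_zero]
        congr 1
        funext i
        rw [Matrix.submatrix_submatrix]
        have h0 : (D.submatrix id (Fin.cons k c)) i 0 = D i k := rfl
        have hc : Fin.cons k c ∘ Fin.succ = c := by
          funext j; simp
        rw [h0]
        have : (id ∘ Fin.succAbove i : Fin a → Fin (a+1)) = Fin.succAbove i := rfl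
        rw [this, hc]
        ring
      rw [Finset.sum_congr rfl (fun k _ => by rw [hexp k])] at hzero
      have hswap : (0 : Q) = ∑ i : Fin (a + 1),
          ((-1) ^ (i : ℕ) * (D.submatrix i.succAbove c).det) • (matVec D Q u i) := by
        rw [hzero]
        simp only [Finset.sum_smul]
        rw [Finset.sum_comm]
        simp only [matVec_apply, Finset.smul_sum, mul_smul]
      rw [hu] at hswap
      rw [Fin.sum_univ_succ] at hswap
      simp only [Fin.cons_succ, Pi.zero_apply, smul_zero, Finset.sum_const_zero, add_zero,
        Fin.cons_zero, Fin.val_zero, pow_zero, one_mul] at hswap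
      have hsub : (D.submatrix (Fin.succAbove (0 : Fin (a+1))) c)
          = Db.submatrix id c := by
        funext i j
        simp [hDb, Matrix.submatrix_apply, Fin.succAbove_zero]
      rw [hsub] at hswap
      exact hswap.symm
    -- hence minorsIdeal Db • ⊤ = ⊥ on Q, so Q is trivial
    have hbot : ∀ q : Q, q = 0 := by
      intro q
      have hq : q ∈ minorsIdeal (R := R) Db • (⊤ : Submodule R Q) := by
        rw [hQtop]; trivial
      refine Submodule.smul_induction_on hq ?_ ?_
      · intro r hr nq _
        refine Submodule.span_induction (p := fun x _ => ∀ w : Q, x • w = 0)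
          ?_ ?_ ?_ ?_ hr nq
        · rintro x ⟨c, rfl⟩ w; exact hkill c w
        · intro w; rw [zero_smul]
        · intro x y _ _ hx hy w; rw [add_smul, hx, hy, add_zero]
        · intro r' x _ hx w
          rw [smul_eq_mul, mul_comm, mul_smul, hx]
      · intro x y hx hy; rw [hx, hy, add_zero]
    have : Subsingleton Q := subsingleton_of_forall_eq 0 hbot
    exact Submodule.Quotient.subsingleton_iff.1 this


section
variable {R : Type u} [CommRing R]

/-- The linear map `x ↦ ∑ i, x i • w i`. -/
def vecHom {α : Type} [Fintype α] (M : Type u) [AddCommGroup M] [Module R M]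
    (w : α → M) : (α → R) →ₗ[R] M where
  toFun x := ∑ i, x i • w i
  map_add' x y := by simp [add_smul, Finset.sum_add_distrib]
  map_smul' r x := by simp [Finset.smul_sum, mul_smul]

@[simp] lemma vecHom_apply {α : Type} [Fintype α] (M : Type u) [AddCommGroup M]
    [Module R M] (w : α → M) (x : α → R) : vecHom M w x = ∑ i, x i • w i := rfl

lemma vecHom_single {α : Type} [Fintype α] [DecidableEq α] (M : Type u) [AddCommGroup M]
    [Module R M] (w : α → M) (i : α) : vecHom (R := R) M w (Pi.single i 1) = w i := by
  rw [vecHom_apply, Finset.sum_eq_single i]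
  · rw [Pi.single_eq_same, one_smul]
  · intro b _ hb; rw [Pi.single_eq_of_ne hb, zero_smul]
  · intro h; exact absurd (Finset.mem_univ i) h

lemma memD_iff_surjective_matVec {α κ : Type} [Fintype α] [DecidableEq α] [Fintype κ] [DecidableEq κ]
    (φ : (α → R) →ₗ[R] (κ → R)) (M : Type u) [AddCommGroup M] [Module R M] :
    MemD φ M ↔ Function.Surjective (matVec (fun i k => φ (Pi.single i 1) k) M) := by
  constructor
  · intro hD w
    obtain ⟨h, hh⟩ := hD (vecHom M w)
    refine ⟨fun k => h (Pi.single k 1), ?_⟩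
    funext i
    classical
    have h1 : ∀ k, φ (Pi.single i 1) k • h (Pi.single k 1)
        = h (φ (Pi.single i 1) k • (Pi.single k 1 : κ → R)) := fun k =>
          (map_smul h _ _).symm
    have h2 : ∑ k, φ (Pi.single i 1) k • (Pi.single k 1 : κ → R) = φ (Pi.single i 1) := by
      have : ∀ k, φ (Pi.single i 1) k • (Pi.single k 1 : κ → R)
          = Pi.single k (φ (Pi.single i 1) k) := by
        intro k
        rw [← Pi.single_smul, smul_eq_mul, mul_one]
      rw [Finset.sum_congr rfl fun k _ => this k, Finset.univ_sum_single]
    calc matVec (fun i k => φ (Pi.single i 1) k) M (fun k => h (Pi.single k 1)) i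
        = ∑ k, φ (Pi.single i 1) k • h (Pi.single k 1) := rfl
      _ = h (∑ k, φ (Pi.single i 1) k • (Pi.single k 1 : κ → R)) := by
          rw [map_sum]; exact Finset.sum_congr rfl fun k _ => h1 k
      _ = h (φ (Pi.single i 1)) := by rw [h2]
      _ = vecHom M w (Pi.single i 1) := by rw [← hh]; rfl
      _ = w i := vecHom_single M w i
  · intro hs g
    obtain ⟨v, hv⟩ := hs (fun i => g (Pi.single i 1))
    refine ⟨vecHom M v, ?_⟩
    apply Module.Basis.ext (Pi.basisFun R α)
    intro i
    rw [Pi.basisFun_apply]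
    show vecHom M v (φ (Pi.single i 1)) = g (Pi.single i 1)
    have : vecHom M v (φ (Pi.single i 1))
        = matVec (fun i k => φ (Pi.single i 1) k) M v i := rfl
    rw [this, hv]

/-- Extension by zero on the left factor. -/
def inlE {α β : Type} : (α → R) →ₗ[R] (α ⊕ β → R) :=
  LinearMap.pi fun k =>
    Sum.rec (motive := fun _ => (α → R) →ₗ[R] R) (fun j => LinearMap.proj j) (fun _ => 0) k

def inrE {α β : Type} : (β → R) →ₗ[R] (α ⊕ β → R) :=
  LinearMap.pi fun k =>
    Sum.rec (motive := fun _ => (β → R) →ₗ[R] R) (fun _ => 0) (fun j => LinearMap.proj j) k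

@[simp] lemma inlE_inl {α β : Type} (x : α → R) (j : α) :
    (inlE (β := β) x) (Sum.inl j) = x j := rfl
@[simp] lemma inlE_inr {α β : Type} (x : α → R) (j : β) :
    (inlE (β := β) x) (Sum.inr j) = 0 := rfl
@[simp] lemma inrE_inl {α β : Type} (x : β → R) (j : α) :
    (inrE (α := α) x) (Sum.inl j) = 0 := rfl
@[simp] lemma inrE_inr {α β : Type} (x : β → R) (j : β) :
    (inrE (α := α) x) (Sum.inr j) = x j := rfl

end

section
variable {R : Type u} [CommRing R]

lemma exists_fg_ideal_of_fgProjMap (p : FGProjMap R) :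
    ∃ J : Ideal R, J.FG ∧ ∀ (M : Type u) [AddCommGroup M] [Module R M],
      MemD p.f M ↔ J • (⊤ : Submodule R M) = ⊤ := by
  haveI := p.finA; haveI := p.projA; haveI := p.finB; haveI := p.projB
  obtain ⟨a, sA, hsA⟩ := Module.Finite.exists_fin' R p.A
  obtain ⟨b, sB, hsB⟩ := Module.Finite.exists_fin' R p.B
  obtain ⟨iA, hiA⟩ := Module.projective_lifting_property sA LinearMap.id hsA
  obtain ⟨iB, hiB⟩ := Module.projective_lifting_property sB LinearMap.id hsB
  set F : (Fin a → R) →ₗ[R] (Fin a ⊕ Fin b → R) :=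
    inlE ∘ₗ (LinearMap.id - iA ∘ₗ sA) + inrE ∘ₗ (iB ∘ₗ (p.f ∘ₗ sA)) with hFdef
  have hFx : ∀ x, F x = inlE (x - iA (sA x)) + inrE (iB (p.f (sA x))) := by
    intro x
    simp [hFdef, LinearMap.sub_apply]
  have hsbib : ∀ z, sB (iB z) = z := fun z => LinearMap.ext_iff.1 hiB z
  have hsaia : ∀ z, sA (iA z) = z := fun z => LinearMap.ext_iff.1 hiA z
  have hMemD : ∀ (M : Type u) [AddCommGroup M] [Module R M],
      MemD p.f M ↔ MemD F M := by
    intro M _ _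
    constructor
    · intro hf g
      obtain ⟨k, hk⟩ := hf (g ∘ₗ iA)
      have hk' : ∀ y, k (p.f y) = g (iA y) := fun y => LinearMap.ext_iff.1 hk y
      refine ⟨g ∘ₗ LinearMap.funLeft R R Sum.inl
        + (k ∘ₗ sB) ∘ₗ LinearMap.funLeft R R Sum.inr, ?_⟩
      apply LinearMap.ext; intro x
      have e1 : (F x) ∘ Sum.inl = x - iA (sA x) := by
        funext j; simp [hFx]
      have e2 : (F x) ∘ Sum.inr = iB (p.f (sA x)) := by
        funext j; simp [hFx]
      show g ((F x) ∘ Sum.inl) + k (sB ((F x) ∘ Sum.inr)) = g x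
      rw [e1, e2, hsbib, hk', map_sub, sub_add_cancel]
    · intro hF φ
      obtain ⟨h, hh⟩ := hF (φ ∘ₗ sA)
      refine ⟨h ∘ₗ (inrE ∘ₗ iB), ?_⟩
      apply LinearMap.ext; intro av
      show h (inrE (iB (p.f av))) = φ av
      have h1 : h (F (iA av)) = φ (sA (iA av)) := LinearMap.ext_iff.1 hh (iA av)
      have h3 : F (iA av) = inrE (iB (p.f av)) := by
        rw [hFx, hsaia, sub_self, map_zero, zero_add]
      rw [← h3, h1, hsaia]
  classical
  refine ⟨minorsIdeal (R := R) (fun i k => F (Pi.single i 1) k), minorsIdeal_fg _,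
    fun M _ _ => ?_⟩
  rw [hMemD M, memD_iff_surjective_matVec F M]
  constructor
  · exact minors_smul_top_of_surjective a _ M
  · exact surjective_matVec_of_minors _ M

end

section
variable {R : Type u} [CommRing R]


def combMap (s : Finset R) (N : Type u) [AddCommGroup N] [Module R N] :
    ((↥s : Type u) → N) →ₗ[R] N where
  toFun w := ∑ x : ↥s, (x : R) • w x
  map_add' x y := by simp [smul_add, Finset.sum_add_distrib]
  map_smul' r x := by
    rw [Finset.smul_sum]
    exact Finset.sum_congr rfl fun z _ => smul_comm _ _ _

lemma range_combMap (s : Finset R) (N : Type u) [AddCommGroup N] [Module R N] :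
    LinearMap.range (combMap s N) = Ideal.span (↑s : Set R) • (⊤ : Submodule R N) := by
  classical
  apply le_antisymm
  · rintro _ ⟨w, rfl⟩
    exact Submodule.sum_mem _ fun x _ =>
      Submodule.smul_mem_smul (Ideal.subset_span x.2) trivial
  · refine Submodule.smul_le.2 fun r hr n _ => ?_
    refine Submodule.span_induction
      (p := fun r _ => ∀ n : N, r • n ∈ LinearMap.range (combMap s N)) ?_ ?_ ?_ ?_ hr n
    · intro x hx n
      refine ⟨Pi.single ⟨x, hx⟩ n, ?_⟩
      show ∑ y : ↥s, (y : R) • Pi.single (⟨x, hx⟩ : ↥s) n y = x • n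
      rw [Finset.sum_eq_single (⟨x, hx⟩ : ↥s)]
      · rw [Pi.single_eq_same]
      · intro b _ hb; rw [Pi.single_eq_of_ne hb, smul_zero]
      · intro h; exact absurd (Finset.mem_univ _) h
    · intro n; rw [zero_smul]; exact zero_mem _
    · intro x y _ _ hx hy n; rw [add_smul]; exact add_mem (hx n) (hy n)
    · intro c x _ hx n; rw [smul_eq_mul, mul_comm, mul_smul]; exact hx (c • n)

lemma smul_top_pi {J : Ideal R} (hJ : J.FG) {T : Type u} (N : T → Type u)
    [∀ t, AddCommGroup (N t)] [∀ t, Module R (N t)]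
    (h : ∀ t, J • (⊤ : Submodule R (N t)) = ⊤) :
    J • (⊤ : Submodule R (∀ t, N t)) = ⊤ := by
  obtain ⟨s, hs⟩ := hJ
  have hsurj : ∀ t, Function.Surjective (combMap s (N t)) := by
    intro t
    rw [← LinearMap.range_eq_top, range_combMap, hs, h t]
  rw [Submodule.eq_top_iff']
  intro v
  choose w hw using fun t => hsurj t (v t)
  have hcv : combMap s (∀ t, N t) (fun x t => w t x) = v := by
    funext t
    show (∑ x : ↥s, (x : R) • (fun (x : ↥s) t => w t x) x) t = v t
    rw [Finset.sum_apply]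
    simp only [Pi.smul_apply]
    exact hw t
  have hv : v ∈ LinearMap.range (combMap s (∀ t, N t)) := ⟨_, hcv⟩
  rw [range_combMap, hs] at hv
  exact hv

lemma smul_top_quotient {I : Ideal R} {M : Type u} [AddCommGroup M] [Module R M]
    (P : Submodule R M) (h : I • (⊤ : Submodule R M) = ⊤) :
    I • (⊤ : Submodule R (M ⧸ P)) = ⊤ := by
  have h2 : Submodule.map P.mkQ (I • (⊤ : Submodule R M))
      = I • Submodule.map P.mkQ ⊤ := Submodule.map_smul'' _ _ _
  rw [h, Submodule.map_top, Submodule.range_mkQ] at h2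
  exact h2.symm

end


section
variable {R : Type u} [CommRing R]

def divFilter {ι : Type u} (J : ι → Ideal R) : Set (Ideal R) :=
  {I | ∀ (M : Type u) [AddCommGroup M] [Module R M],
    (∀ i, J i • (⊤ : Submodule R M) = ⊤) → I • (⊤ : Submodule R M) = ⊤}

lemma mem_divFilter {ι : Type u} {J : ι → Ideal R} {I : Ideal R} :
    I ∈ divFilter J ↔ ∀ (M : Type u) [AddCommGroup M] [Module R M],
      (∀ i, J i • (⊤ : Submodule R M) = ⊤) → I • (⊤ : Submodule R M) = ⊤ :=
  Iff.rfl

end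


/-- If `σ` (a map between projective modules over a commutative ring) is of finite type,
then `D_σ = Div G` for some Gabriel filter of finite type `G`. -/
theorem stmt_14 {R : Type u} [CommRing R]
    (P₁ P₀ : Type u) [AddCommGroup P₁] [Module R P₁] [AddCommGroup P₀] [Module R P₀]
    [Module.Projective R P₁] [Module.Projective R P₀] (σ : P₁ →ₗ[R] P₀)
    (hft : ∃ (I : Type u) (s : I → FGProjMap R),
      ∀ (M : Type u) [AddCommGroup M] [Module R M],
        MemD σ M ↔ ∀ i, MemD (s i).f M) :
    ∃ G : Set (Ideal R), IsGabrielFilter G ∧ GabrielFiniteType G ∧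
      ∀ (M : Type u) [AddCommGroup M] [Module R M], MemD σ M ↔ MemDiv G M := by
  obtain ⟨ι, s, hs⟩ := hft
  choose J hJfg hJ using fun i => exists_fg_ideal_of_fgProjMap (s i)
  set G : Set (Ideal R) := divFilter J with hG
  have hJG : ∀ i, J i ∈ G := fun i => mem_divFilter.2 fun M _ _ hd => hd i
  have hup : ∀ I I' : Ideal R, I ∈ G → I ≤ I' → I' ∈ G := by
    intro I I' hI hle
    rw [hG, mem_divFilter] at hI ⊢
    intro M _ _ hd
    have h1 : I • (⊤ : Submodule R M) ≤ I' • ⊤ := Submodule.smul_mono_left hle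
    rw [hI M hd] at h1
    exact le_antisymm le_top h1
  refine ⟨G, ⟨?_, hup, ?_, ?_⟩, ?_, ?_⟩
  · -- ⊤ ∈ G
    rw [hG, mem_divFilter]
    intro M _ _ _
    exact Submodule.top_smul ⊤
  · -- stability under (I : x)
    intro I hI x
    refine hup I _ hI ?_
    intro r hr
    show x • r ∈ I
    rw [smul_eq_mul]
    exact Ideal.mul_mem_left I x hr
  · -- transitivity axiom
    rintro I' ⟨I, hI, hcomap⟩
    rw [hG, mem_divFilter] at hI
    rw [hG, mem_divFilter]
    intro M _ _ hd
    set Q := M ⧸ (I' • (⊤ : Submodule R M)) with hQ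
    have hdQ : ∀ i, J i • (⊤ : Submodule R Q) = ⊤ := fun i => smul_top_quotient _ (hd i)
    have hIQ : I • (⊤ : Submodule R Q) = ⊤ := hI Q hdQ
    have hxq : ∀ x ∈ I, ∀ q : Q, x • q = 0 := by
      intro x hx q
      have hq : q ∈ Submodule.comap (LinearMap.lsmul R R x) I' • (⊤ : Submodule R Q) := by
        have hcx := hcomap x hx
        rw [hG, mem_divFilter] at hcx
        rw [hcx Q hdQ]; trivial
      refine Submodule.smul_induction_on hq ?_ ?_
      · intro c hc q' _
        rw [smul_smul]
        obtain ⟨m, rfl⟩ := Submodule.Quotient.mk_surjective _ q'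
        rw [← Submodule.Quotient.mk_smul, Submodule.Quotient.mk_eq_zero]
        have hxc : x * c ∈ I' := by simpa using hc
        exact Submodule.smul_mem_smul hxc trivial
      · intro q1 q2 h1 h2; rw [smul_add, h1, h2, add_zero]
    have hQ0 : ∀ q : Q, q = 0 := by
      intro q
      have hq : q ∈ I • (⊤ : Submodule R Q) := by rw [hIQ]; trivial
      refine Submodule.smul_induction_on hq ?_ ?_
      · intro r hr n _; exact hxq r hr n
      · intro q1 q2 h1 h2; rw [h1, h2, add_zero]
    exact Submodule.Quotient.subsingleton_iff.1 (subsingleton_of_forall_eq 0 hQ0)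
  · -- finite type
    intro I hI
    rw [hG, mem_divFilter] at hI
    by_contra hcon
    push_neg at hcon
    have hF : ∀ F : {F : Ideal R // F.FG ∧ F ≤ I},
        ∃ (M : Type u) (_ : AddCommGroup M) (_ : Module R M),
          (∀ i, J i • (⊤ : Submodule R M) = ⊤) ∧ F.1 • (⊤ : Submodule R M) ≠ ⊤ := by
      intro F
      have hFnotG : F.1 ∉ G := by
        intro hFG
        exact hcon F.1 hFG F.2.2 F.2.1
      rw [hG, mem_divFilter] at hFnotG
      push_neg at hFnotG
      exact hFnotG
    choose N i1 i2 hNdiv hNne using hF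
    letI : ∀ F, AddCommGroup (N F) := i1
    letI : ∀ F, Module R (N F) := i2
    have hdivPi : ∀ i, J i • (⊤ : Submodule R (∀ F, N F)) = ⊤ :=
      fun i => smul_top_pi (hJfg i) N (fun F => hNdiv F i)
    have hIPi : I • (⊤ : Submodule R (∀ F, N F)) = ⊤ := hI _ hdivPi
    have hv : ∀ F, ∃ m : N F, m ∉ F.1 • (⊤ : Submodule R (N F)) := by
      intro F
      by_contra hq; push_neg at hq
      exact hNne F (Submodule.eq_top_iff'.2 hq)
    choose v hvv using hv
    have hvmem : v ∈ I • (⊤ : Submodule R (∀ F, N F)) := by rw [hIPi]; trivial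
    have hex : ∃ F0 : Ideal R, F0.FG ∧ F0 ≤ I ∧
        ∀ F, v F ∈ F0 • (⊤ : Submodule R (N F)) := by
      refine Submodule.smul_induction_on hvmem ?_ ?_
      · intro r hr w _
        refine ⟨Ideal.span {r}, Submodule.fg_span_singleton r, ?_, ?_⟩
        · rw [Ideal.span_le]; simpa using hr
        · intro F
          show (r • w) F ∈ _
          exact Submodule.smul_mem_smul (Ideal.mem_span_singleton_self r) trivial
      · rintro w1 w2 ⟨F1, h1fg, h1le, h1m⟩ ⟨F2, h2fg, h2le, h2m⟩
        refine ⟨F1 ⊔ F2, Submodule.FG.sup h1fg h2fg, sup_le h1le h2le, fun F => ?_⟩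
        show (w1 + w2) F ∈ _
        exact add_mem (Submodule.smul_mono_left le_sup_left (h1m F))
          (Submodule.smul_mono_left le_sup_right (h2m F))
    obtain ⟨F0, hfg, hle, hm⟩ := hex
    exact hvv ⟨F0, hfg, hle⟩ (hm ⟨F0, hfg, hle⟩)
  · -- the equivalence
    intro M _ _
    constructor
    · intro hMD I hIG
      rw [hG, mem_divFilter] at hIG
      exact hIG M (fun i => (hJ i M).1 ((hs M).1 hMD i))
    · intro hdiv
      exact (hs M).2 fun i => (hJ i M).2 (hdiv (J i) (hJG i))
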